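/- Let a ∈ ℝ, λ > 1, c > 0, and let f : ℝ → ℝ be a bounded continuously differentiable function with f'(x) ≥ −c for all x and f'(x₀) = −c at some point x₀. Let T_* = T_*(a,λ,c), and let φ be the classical solution of the damped Burgers equation on ℝ × [0,T_*) determined by φ(x + f(x)·B(t), t) = f(x)/A(t). Then φ remains uniformly bounded: |φ(x,t)| ≤ (sup_{y∈ℝ} |f(y)|)·exp(|a|/(λ−1)) for all (x,t) ∈ ℝ × [0,T_*); whereas the spatial derivative blows up at the shock time: ∂_x φ(x₀ + f(x₀)·B(t), t) = −c/(A(t)·(1 − c·B(t))) → −∞ as t → T_*⁻. -/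

import Mathlib

/-- `A(t) = exp((a/(λ−1))·(1 − (1+t)^(1−λ)))`, i.e. `A(t) = exp(∫₀ᵗ a/(1+s)^λ ds)`. -/
noncomputable def dampA (a lam t : ℝ) : ℝ :=
  Real.exp (a / (lam - 1) * (1 - (1 + t) ^ (1 - lam)))

/-- `B(t) = ∫₀ᵗ A(s)⁻¹ ds = ∫₀ᵗ exp((a/(λ−1))·((1+s)^(1−λ) − 1)) ds`. -/
noncomputable def dampB (a lam t : ℝ) : ℝ :=
  ∫ s in (0:ℝ)..t, Real.exp (a / (lam - 1) * ((1 + s) ^ (1 - lam) - 1))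

open Filter Set intervalIntegral in
lemma damp_contAt (a lam : ℝ) {s : ℝ} (hs : (-1:ℝ) < s) :
    ContinuousAt (fun s : ℝ => Real.exp (a / (lam - 1) * ((1 + s) ^ (1 - lam) - 1))) s := by
  have h1 : (1:ℝ) + s ≠ 0 := by linarith
  have hr : ContinuousAt (fun s : ℝ => (1 + s) ^ (1 - lam)) s := by
    exact (Real.continuousAt_rpow_const _ _ (Or.inl h1)).comp
      (continuousAt_const.add continuousAt_id)
  exact Real.continuous_exp.continuousAt.comp (((hr.sub continuousAt_const).const_mul _))

open Filter Set intervalIntegral in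
lemma damp_intInt (a lam : ℝ) {t₁ t₂ : ℝ} (h1 : 0 ≤ t₁) (h2 : 0 ≤ t₂) :
    IntervalIntegrable
      (fun s : ℝ => Real.exp (a / (lam - 1) * ((1 + s) ^ (1 - lam) - 1))) MeasureTheory.volume t₁ t₂ := by
  apply ContinuousOn.intervalIntegrable
  intro x hx
  have hx0 : (0:ℝ) ≤ x := by
    rcases hx with ⟨hl, _⟩
    exact le_trans (le_min h1 h2) hl
  exact (damp_contAt a lam (by linarith)).continuousWithinAt

open Filter Set intervalIntegral in
lemma dampB_strictMono (a lam : ℝ) {t₁ t₂ : ℝ} (h1 : 0 ≤ t₁) (h12 : t₁ < t₂) :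
    dampB a lam t₁ < dampB a lam t₂ := by
  have h2 : (0:ℝ) ≤ t₂ := le_trans h1 h12.le
  have hadd := intervalIntegral.integral_add_adjacent_intervals
    (damp_intInt a lam le_rfl h1) (damp_intInt a lam h1 h2)
  have hpos : 0 < ∫ s in t₁..t₂,
      Real.exp (a / (lam - 1) * ((1 + s) ^ (1 - lam) - 1)) :=
    intervalIntegral.intervalIntegral_pos_of_pos_on (damp_intInt a lam h1 h2)
      (fun x _ => Real.exp_pos _) h12
  have : dampB a lam t₁ + ∫ s in t₁..t₂,
      Real.exp (a / (lam - 1) * ((1 + s) ^ (1 - lam) - 1)) = dampB a lam t₂ := hadd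
  linarith

lemma dampB_nonneg (a lam : ℝ) {t : ℝ} (ht : 0 ≤ t) : 0 ≤ dampB a lam t :=
  intervalIntegral.integral_nonneg ht (fun _ _ => (Real.exp_pos _).le)

lemma dampA_inv_le (a lam : ℝ) (hlam : 1 < lam) {t : ℝ} (ht : 0 ≤ t) :
    (dampA a lam t)⁻¹ ≤ Real.exp (|a| / (lam - 1)) := by
  have h1t : (0:ℝ) < 1 + t := by linarith
  have hw1 : (1 + t) ^ (1 - lam) ≤ 1 :=
    Real.rpow_le_one_of_one_le_of_nonpos (by linarith) (by linarith)
  have hw0 : 0 < (1 + t) ^ (1 - lam) := Real.rpow_pos_of_pos h1t _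
  rw [dampA, ← Real.exp_neg, Real.exp_le_exp]
  have habs : |a / (lam - 1) * (1 - (1 + t) ^ (1 - lam))| ≤ |a| / (lam - 1) := by
    rw [abs_mul, abs_div, abs_of_pos (by linarith : (0:ℝ) < lam - 1),
      abs_of_nonneg (by linarith : (0:ℝ) ≤ 1 - (1 + t) ^ (1 - lam))]
    have : |a| / (lam - 1) * (1 - (1 + t) ^ (1 - lam)) ≤ |a| / (lam - 1) * 1 := by
      apply mul_le_mul_of_nonneg_left (by linarith)
      exact div_nonneg (abs_nonneg a) (by linarith)
    linarith
  have := abs_le.1 habs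
  linarith [this.1]

open Filter Set intervalIntegral in
/-- At shock formation for the damped Burgers equation, the solution itself stays uniformly
bounded by `(sup |f|)·exp(|a|/(λ−1))`, while the spatial derivative along the critical
characteristic equals `−c/(A(t)·(1 − c·B(t)))` and blows up to `−∞` as `t → T_*⁻`. -/
theorem stmt12 (a lam c Tstar : ℝ) (hlam : 1 < lam) (hc : 0 < c)
    (hTs : 0 < Tstar) (hBTs : dampB a lam Tstar = 1 / c)
    (f : ℝ → ℝ) (hf : ContDiff ℝ 1 f) (hfb : ∃ M : ℝ, ∀ y : ℝ, |f y| ≤ M)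
    (hf' : ∀ x : ℝ, -c ≤ deriv f x) (x₀ : ℝ) (hx₀ : deriv f x₀ = -c)
    (φ : ℝ → ℝ → ℝ)
    (hφ : ∀ x : ℝ, ∀ t ∈ Set.Ico (0 : ℝ) Tstar,
      φ (x + f x * dampB a lam t) t = f x / dampA a lam t) :
    (∀ x : ℝ, ∀ t ∈ Set.Ico (0 : ℝ) Tstar,
      |φ x t| ≤ (⨆ y : ℝ, |f y|) * Real.exp (|a| / (lam - 1))) ∧
    (∀ t ∈ Set.Ico (0 : ℝ) Tstar,
      deriv (fun y => φ y t) (x₀ + f x₀ * dampB a lam t) =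
        -c / (dampA a lam t * (1 - c * dampB a lam t))) ∧
    Filter.Tendsto (fun t => deriv (fun y => φ y t) (x₀ + f x₀ * dampB a lam t))
      (nhdsWithin Tstar (Set.Iio Tstar)) Filter.atBot := by
  obtain ⟨M, hM⟩ := hfb
  have hfd : Differentiable ℝ f := hf.differentiable one_ne_zero
  -- surjectivity of the characteristic map for `0 ≤ b`
  have hsurj : ∀ b : ℝ, 0 ≤ b → Function.Surjective (fun y => y + f y * b) := by
    intro b hb
    apply Continuous.surjective (continuous_id.add (hf.continuous.mul continuous_const))
    · apply tendsto_atTop_mono (f := fun y : ℝ => y - M * b)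
      · intro y
        have h2 : -M * b ≤ f y * b := mul_le_mul_of_nonneg_right ((abs_le.1 (hM y)).1) hb
        simp only [Pi.add_apply, Pi.mul_apply, id_eq]
        linarith
      · exact tendsto_atTop_add_const_right _ _ tendsto_id
    · apply tendsto_atBot_mono (f := fun y : ℝ => y + M * b)
      · intro y
        have h2 : f y * b ≤ M * b := mul_le_mul_of_nonneg_right ((abs_le.1 (hM y)).2) hb
        simp only [Pi.add_apply, Pi.mul_apply, id_eq]
        linarith
      · exact tendsto_atBot_add_const_right _ _ tendsto_id
  -- key facts about B on [0, Tstar)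
  have hBlt : ∀ t ∈ Set.Ico (0:ℝ) Tstar, c * dampB a lam t < 1 := by
    intro t ⟨ht0, htT⟩
    have := dampB_strictMono a lam ht0 htT
    rw [hBTs] at this
    calc c * dampB a lam t < c * (1/c) := by exact mul_lt_mul_of_pos_left this hc
    _ = 1 := by field_simp
  -- Part 2 core: the derivative formula
  have part2 : ∀ t ∈ Set.Ico (0:ℝ) Tstar,
      deriv (fun y => φ y t) (x₀ + f x₀ * dampB a lam t) =
        -c / (dampA a lam t * (1 - c * dampB a lam t)) := by
    intro t ht
    obtain ⟨ht0, htT⟩ := ht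
    set b := dampB a lam t with hbdef
    have hb0 : 0 ≤ b := dampB_nonneg a lam ht0
    have hbc : c * b < 1 := hBlt t ⟨ht0, htT⟩
    set g : ℝ → ℝ := fun y => y + f y * b with hgdef
    have hg' : ∀ y, HasDerivAt g (1 + deriv f y * b) y := by
      intro y
      exact (hasDerivAt_id y).add (((hfd y).hasDerivAt).mul_const b)
    have hgpos : ∀ y, 0 < 1 + deriv f y * b := by
      intro y
      nlinarith [mul_le_mul_of_nonneg_right (hf' y) hb0]
    have hmono : StrictMono g := strictMono_of_hasDerivAt_pos hg' hgpos
    have hsur : Function.Surjective g := hsurj b hb0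
    set e := StrictMono.orderIsoOfSurjective g hmono hsur with hedef
    set ginv : ℝ → ℝ := fun x => e.symm x with hginvdef
    have hleft : ∀ x, g (ginv x) = x := fun x =>
      StrictMono.orderIsoOfSurjective_self_symm_apply g hmono hsur x
    have hright : ∀ y, ginv (g y) = y := fun y =>
      StrictMono.orderIsoOfSurjective_symm_apply_self g hmono hsur y
    set x₁ := x₀ + f x₀ * b with hx1def
    have hgx₀ : g x₀ = x₁ := rfl
    have hinvx₁ : ginv x₁ = x₀ := by rw [← hgx₀, hright]
    have hcont : ContinuousAt ginv x₁ :=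
      (OrderIso.continuous e.symm).continuousAt
    have hinv : HasDerivAt ginv (1 + deriv f x₀ * b)⁻¹ x₁ := by
      apply HasDerivAt.of_local_left_inverse hcont _ (ne_of_gt (hgpos x₀))
        (Filter.Eventually.of_forall hleft)
      rw [hinvx₁]
      exact hg' x₀
    have hphi : (fun y => φ y t) = fun y => f (ginv y) / dampA a lam t := by
      funext y
      conv_lhs => rw [← hleft y]
      exact hφ (ginv y) t ⟨ht0, htT⟩
    have hder : HasDerivAt (fun y => f (ginv y) / dampA a lam t)
        (deriv f x₀ * (1 + deriv f x₀ * b)⁻¹ / dampA a lam t) x₁ := by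
      have hcomp : HasDerivAt (f ∘ ginv) (deriv f x₀ * (1 + deriv f x₀ * b)⁻¹) x₁ := by
        apply HasDerivAt.comp
        · rw [hinvx₁]; exact (hfd x₀).hasDerivAt
        · exact hinv
      exact hcomp.div_const _
    rw [hphi, hder.deriv, hx₀]
    have hA : dampA a lam t ≠ 0 := Real.exp_ne_zero _
    have h1cb : (1:ℝ) - c * b ≠ 0 := by linarith
    have : 1 + -c * b = 1 - c * b := by ring
    rw [this]
    rw [← div_eq_mul_inv, div_div, mul_comm (1 - c * b)]
  refine ⟨?_, part2, ?_⟩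
  · -- boundedness
    intro x t ht
    obtain ⟨ht0, htT⟩ := ht
    have hb0 : 0 ≤ dampB a lam t := dampB_nonneg a lam ht0
    obtain ⟨y, hy⟩ := hsurj (dampB a lam t) hb0 x
    have hval : φ x t = f y / dampA a lam t := by
      rw [← hy]; exact hφ y t ⟨ht0, htT⟩
    have hbdd : BddAbove (Set.range fun y => |f y|) := ⟨M, by rintro _ ⟨z, rfl⟩; exact hM z⟩
    have h1 : |f y| ≤ ⨆ z : ℝ, |f z| := le_ciSup hbdd y
    have h2 : (dampA a lam t)⁻¹ ≤ Real.exp (|a| / (lam - 1)) := dampA_inv_le a lam hlam ht0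
    have hApos : 0 < dampA a lam t := Real.exp_pos _
    rw [hval, abs_div, abs_of_pos hApos, div_eq_mul_inv]
    exact mul_le_mul h1 h2 (by positivity) (le_trans (abs_nonneg _) h1)
  · -- blow-up
    have hmem : Set.Ioo (0:ℝ) Tstar ∈ nhdsWithin Tstar (Set.Iio Tstar) :=
      Ioo_mem_nhdsLT_of_mem ⟨hTs, le_rfl⟩
    have hkey : (fun t => deriv (fun y => φ y t) (x₀ + f x₀ * dampB a lam t)) =ᶠ[nhdsWithin Tstar (Set.Iio Tstar)]
        fun t => -c / (dampA a lam t * (1 - c * dampB a lam t)) := by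
      filter_upwards [hmem] with t ht
      exact part2 t ⟨ht.1.le, ht.2⟩
    rw [Filter.tendsto_congr' hkey]
    -- the denominator tends to 0 from the right
    have hAcont : ContinuousAt (dampA a lam) Tstar := by
      have h1 : (1:ℝ) + Tstar ≠ 0 := by linarith
      apply Real.continuous_exp.continuousAt.comp
      apply ContinuousAt.mul continuousAt_const
      exact continuousAt_const.sub ((Real.continuousAt_rpow_const _ _ (Or.inl h1)).comp
        (continuousAt_const.add continuousAt_id))
    have hBcont : Filter.Tendsto (dampB a lam) (nhdsWithin Tstar (Set.Iio Tstar)) (nhds (1/c)) := by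
      have hconB : ContinuousOn (dampB a lam) (Set.uIcc (0:ℝ) Tstar) :=
        intervalIntegral.continuousOn_primitive_interval'
          (damp_intInt a lam le_rfl hTs.le) Set.left_mem_uIcc
      have hcw : ContinuousWithinAt (dampB a lam) (Set.uIcc (0:ℝ) Tstar) Tstar :=
        hconB Tstar Set.right_mem_uIcc
      have hle : nhdsWithin Tstar (Set.Iio Tstar) ≤ nhdsWithin Tstar (Set.uIcc (0:ℝ) Tstar) := by
        rw [← nhdsWithin_Ioo_eq_nhdsLT hTs]
        apply nhdsWithin_mono
        intro z hz
        rw [Set.uIcc_of_le hTs.le]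
        exact ⟨hz.1.le, hz.2.le⟩
      rw [← hBTs]
      exact hcw.tendsto.mono_left hle
    have hden : Filter.Tendsto (fun t => dampA a lam t * (1 - c * dampB a lam t))
        (nhdsWithin Tstar (Set.Iio Tstar)) (nhds 0) := by
      have h1 : Filter.Tendsto (fun t => (1:ℝ) - c * dampB a lam t)
          (nhdsWithin Tstar (Set.Iio Tstar)) (nhds (1 - c * (1/c))) :=
        tendsto_const_nhds.sub (hBcont.const_mul c)
      have h2 := ((hAcont.continuousWithinAt (s := Set.Iio Tstar)).tendsto).mul h1
      simpa [mul_one_div, mul_inv_cancel₀ hc.ne'] using h2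
    have hpos : ∀ᶠ t in nhdsWithin Tstar (Set.Iio Tstar),
        0 < dampA a lam t * (1 - c * dampB a lam t) := by
      filter_upwards [hmem] with t ht
      have := hBlt t ⟨ht.1.le, ht.2⟩
      have hApos : 0 < dampA a lam t := Real.exp_pos _
      nlinarith
    have hden' : Filter.Tendsto (fun t => dampA a lam t * (1 - c * dampB a lam t))
        (nhdsWithin Tstar (Set.Iio Tstar)) (nhdsWithin 0 (Set.Ioi 0)) :=
      tendsto_nhdsWithin_of_tendsto_nhds_of_eventually_within _ hden hpos
    have hinv : Filter.Tendsto (fun t => (dampA a lam t * (1 - c * dampB a lam t))⁻¹)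
        (nhdsWithin Tstar (Set.Iio Tstar)) Filter.atTop :=
      tendsto_inv_nhdsGT_zero.comp hden'
    have := hinv.const_mul_atTop_of_neg (by linarith : -c < 0)
    simpa [div_eq_mul_inv] using this
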